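/- The polynomial y0²z0² + y0²z1² + y1²z0² − 2·y0·y1·z0·z1 + y1²z1² is irreducible in the polynomial ring ℂ[y0,y1,z0,z1]. -/

import Mathlib

set_option maxHeartbeats 1000000

open MvPolynomial

/-- The bi-degree (2,2) polynomial `y0²z0² + y0²z1² + y1²z0² − 2y0y1z0z1 + y1²z1²`,
with variables `X 0 = y0, X 1 = y1, X 2 = z0, X 3 = z1`; it is the specialization
`Q̃(0,1,y0,y1,z0,z1)`. -/
noncomputable def Qt01 : MvPolynomial (Fin 4) ℂ :=
  X 0 ^ 2 * X 2 ^ 2 + X 0 ^ 2 * X 3 ^ 2 + X 1 ^ 2 * X 2 ^ 2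
    - 2 * (X 0 * X 1 * X 2 * X 3) + X 1 ^ 2 * X 3 ^ 2

namespace Qt01Aux

/-- the coefficient ring after splitting off the first variable. -/
abbrev R3 : Type := MvPolynomial (Fin 3) ℂ

noncomputable instance : NormalizationMonoid R3 :=
  UniqueFactorizationMonoid.normalizationMonoid.toNormalizationMonoid

noncomputable instance : NormalizedGCDMonoid R3 :=
  UniqueFactorizationMonoid.toNormalizedGCDMonoid R3

/-- coefficient of degree 2 -/
noncomputable def a2 : R3 := X 1 ^ 2 + X 2 ^ 2
/-- coefficient of degree 1 -/
noncomputable def a1 : R3 := -(2 * X 0 * X 1 * X 2)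
/-- coefficient of degree 0 -/
noncomputable def a0 : R3 := X 0 ^ 2 * (X 1 ^ 2 + X 2 ^ 2)

/-- the image of `Qt01` in `R3[X]`. -/
noncomputable def P : Polynomial R3 :=
  Polynomial.C a2 * Polynomial.X ^ 2 + Polynomial.C a1 * Polynomial.X + Polynomial.C a0

lemma a2_ne_zero : a2 ≠ 0 := by
  intro h
  have := congrArg (eval ![0, 1, 0]) h
  simp [a2] at this

lemma X_irred (i : Fin 3) : Irreducible (X i : R3) := by
  have h0 : Irreducible (X 0 : R3) := by
    have h : Irreducible ((finSuccEquiv ℂ 2) (X 0 : R3)) := by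
      rw [finSuccEquiv_X_zero]
      exact Polynomial.prime_X.irreducible
    exact (MulEquiv.irreducible_iff (finSuccEquiv ℂ 2)).mp h
  have heX : (renameEquiv ℂ (Equiv.swap (0 : Fin 3) i)) (X 0 : R3) = X i := by
    simp [renameEquiv_apply, rename_X, Equiv.swap_apply_left]
  rw [← heX]
  exact (MulEquiv.irreducible_iff (renameEquiv ℂ (Equiv.swap (0 : Fin 3) i))).mpr h0

lemma not_X_dvd_a2 (i : Fin 3) : ¬ (X i : R3) ∣ a2 := by
  intro h
  fin_cases i
  · have := map_dvd (eval ![0, 1, 0]) h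
    simp [a2] at this
  · have := map_dvd (eval ![0, 0, 1]) h
    simp [a2] at this
  · have := map_dvd (eval ![0, 1, 0]) h
    simp [a2] at this

lemma X_dvd_of_nonunit_dvd (i : Fin 3) {q : R3} (hq : ¬IsUnit q) (h : q ∣ X i) :
    (X i : R3) ∣ q := by
  obtain ⟨u, hu⟩ := h
  rcases ((X_irred i).isUnit_or_isUnit hu) with h' | h'
  · exact absurd h' hq
  · obtain ⟨U, rfl⟩ := h'
    exact ⟨↑U⁻¹, by rw [hu, mul_assoc, Units.mul_inv, mul_one]⟩

lemma P_primitive : P.IsPrimitive := by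
  intro r hr
  rw [Polynomial.C_dvd_iff_dvd_coeff] at hr
  have h2 : r ∣ a2 := by
    simpa [P, Polynomial.coeff_add, Polynomial.coeff_C_mul,
      Polynomial.coeff_X_pow, Polynomial.coeff_X, Polynomial.coeff_C] using hr 2
  have h1 : r ∣ 2 * X 0 * X 1 * X 2 := by
    have h := hr 1
    simp only [P, Polynomial.coeff_add, Polynomial.coeff_C_mul,
      Polynomial.coeff_X_pow, Polynomial.coeff_X, Polynomial.coeff_C, a1] at h
    have h' : r ∣ -(2 * X 0 * X 1 * X 2) := by simpa using h
    simpa using (dvd_neg).mp h'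
  by_contra hru
  have hr0 : r ≠ 0 := by
    rintro rfl
    exact a2_ne_zero (zero_dvd_iff.mp h2)
  obtain ⟨q, hqirr, hqdvd⟩ := WfDvdMonoid.exists_irreducible_factor hru hr0
  have hqp : Prime q := (UniqueFactorizationMonoid.irreducible_iff_prime).mp hqirr
  have hq1 : q ∣ 2 * X 0 * X 1 * X 2 := hqdvd.trans h1
  have hq2 : q ∣ a2 := hqdvd.trans h2
  have h2u : IsUnit (2 : R3) := by
    have h' : IsUnit (MvPolynomial.C (2 : ℂ) : R3) :=
      (isUnit_iff_ne_zero.mpr two_ne_zero).map (MvPolynomial.C : ℂ →+* R3)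
    rwa [show (MvPolynomial.C (2 : ℂ) : R3) = 2 from map_ofNat _ 2] at h'
  have hqX : q ∣ (X 0 : R3) ∨ q ∣ (X 1 : R3) ∨ q ∣ (X 2 : R3) := by
    rcases hqp.dvd_mul.mp hq1 with h | h
    · rcases hqp.dvd_mul.mp h with h' | h'
      · rcases hqp.dvd_mul.mp h' with h'' | h''
        · exact absurd (isUnit_of_dvd_unit h'' h2u) hqirr.not_isUnit
        · exact Or.inl h''
      · exact Or.inr (Or.inl h')
    · exact Or.inr (Or.inr h)
  obtain hi | hi | hi := hqX
  · exact not_X_dvd_a2 0 ((X_dvd_of_nonunit_dvd 0 hqirr.not_isUnit hi).trans hq2)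
  · exact not_X_dvd_a2 1 ((X_dvd_of_nonunit_dvd 1 hqirr.not_isUnit hi).trans hq2)
  · exact not_X_dvd_a2 2 ((X_dvd_of_nonunit_dvd 2 hqirr.not_isUnit hi).trans hq2)

/-! ### complex number facts -/

noncomputable def ω : ℂ := (-1 + Complex.I * (Real.sqrt 3 : ℝ)) / 2

lemma sq3 : ((Real.sqrt 3 : ℝ) : ℂ) ^ 2 = 3 := by
  rw [← Complex.ofReal_pow, Real.sq_sqrt (by norm_num : (0:ℝ) ≤ 3)]
  norm_num

lemma homega : ω ^ 2 + ω + 1 = 0 := by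
  have hI : (Complex.I) ^ 2 = -1 := Complex.I_sq
  unfold ω
  linear_combination (((Real.sqrt 3 : ℝ) : ℂ) ^ 2 / 4) * hI - (1/4 : ℂ) * sq3

lemma sqrt3_ne : ((Real.sqrt 3 : ℝ) : ℂ) ≠ 0 := by
  simp only [ne_eq, Complex.ofReal_eq_zero]
  positivity

lemma homega_ne_half : 2 * ω + 1 ≠ 0 := by
  unfold ω
  intro h
  have h2 : Complex.I * (Real.sqrt 3 : ℝ) = 0 := by linear_combination h
  rcases mul_eq_zero.mp h2 with h' | h'
  · exact Complex.I_ne_zero h'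
  · exact sqrt3_ne h'

lemma homega_ne_zero : ω ≠ 0 := by
  intro h
  have h' := homega
  rw [h] at h'
  norm_num at h'

/-! ### the main argument -/

theorem P_irreducible : Irreducible P := by
  rw [P_primitive.irreducible_iff_irreducible_map_fraction_map (K := FractionRing R3)]
  have hinj : Function.Injective (algebraMap R3 (FractionRing R3)) :=
    IsFractionRing.injective R3 (FractionRing R3)
  have hPmap : P.map (algebraMap R3 (FractionRing R3))
      = Polynomial.C (algebraMap R3 (FractionRing R3) a2) * Polynomial.X ^ 2
      + Polynomial.C (algebraMap R3 (FractionRing R3) a1) * Polynomial.X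
      + Polynomial.C (algebraMap R3 (FractionRing R3) a0) := by
    simp [P, Polynomial.map_add, Polynomial.map_mul, Polynomial.map_pow,
      Polynomial.map_C, Polynomial.map_X]
  have hA : algebraMap R3 (FractionRing R3) a2 ≠ 0 := fun h =>
    a2_ne_zero (hinj (by rw [h, map_zero]))
  have hnd : (P.map (algebraMap R3 (FractionRing R3))).natDegree = 2 := by
    rw [hPmap]; exact Polynomial.natDegree_quadratic hA
  rw [Polynomial.irreducible_iff_roots_eq_zero_of_degree_le_three
    (by simp [hnd]) (by simp [hnd])]
  by_contra hroots
  obtain ⟨r, hr⟩ := Multiset.exists_mem_of_ne_zero hroots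
  rw [Polynomial.mem_roots'] at hr
  have hroot : algebraMap R3 (FractionRing R3) a2 * r ^ 2
      + algebraMap R3 (FractionRing R3) a1 * r + algebraMap R3 (FractionRing R3) a0 = 0 := by
    have h := hr.2
    rw [hPmap] at h
    simpa [Polynomial.IsRoot] using h
  -- complete the square
  set s : FractionRing R3 := 2 * algebraMap R3 (FractionRing R3) a2 * r
    + algebraMap R3 (FractionRing R3) a1 with hs
  have hs2 : s ^ 2 = algebraMap R3 (FractionRing R3) a1 ^ 2
      - 4 * (algebraMap R3 (FractionRing R3) a2 * algebraMap R3 (FractionRing R3) a0) := by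
    rw [hs]; linear_combination (4 * algebraMap R3 (FractionRing R3) a2) * hroot
  have hD' : algebraMap R3 (FractionRing R3) (a1 ^ 2 - 4 * (a2 * a0))
      = algebraMap R3 (FractionRing R3) a1 ^ 2
      - 4 * (algebraMap R3 (FractionRing R3) a2 * algebraMap R3 (FractionRing R3) a0) := by
    simp [map_sub, map_mul, map_pow, map_ofNat]
  obtain ⟨⟨n, d⟩, hnd2⟩ := IsLocalization.surj (nonZeroDivisors R3) s
  simp only at hnd2
  have hd0 : (d : R3) ≠ 0 := nonZeroDivisors.ne_zero d.2
  have hkey : n ^ 2 = (a1 ^ 2 - 4 * (a2 * a0)) * (d : R3) ^ 2 := by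
    apply hinj
    have hmaps : algebraMap R3 (FractionRing R3) n
        = s * algebraMap R3 (FractionRing R3) (d : R3) := hnd2.symm
    rw [map_pow, map_mul, map_pow, hmaps, hD', ← hs2]
    ring
  -- rewrite the discriminant
  set m : R3 := X 0 * (d : R3) with hm_def
  have hkey2 : n ^ 2 = -4 * (X 1 ^ 4 + X 1 ^ 2 * X 2 ^ 2 + X 2 ^ 4) * m ^ 2 := by
    rw [hm_def, hkey]; unfold a1 a2 a0; ring
  -- choose a good evaluation point
  have hmul_ne : m * X 2 ≠ 0 :=
    mul_ne_zero (mul_ne_zero (MvPolynomial.X_ne_zero 0) hd0) (MvPolynomial.X_ne_zero 2)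
  obtain ⟨x, hx⟩ : ∃ x : Fin 3 → ℂ, eval x (m * X 2) ≠ 0 := by
    by_contra h
    push_neg at h
    exact hmul_ne (MvPolynomial.funext fun x => by simpa using h x)
  have hx' : eval x m * x 2 ≠ 0 := by
    simpa [map_mul] using hx
  have hc : x 2 ≠ 0 := right_ne_zero_of_mul hx'
  have hm : eval x m ≠ 0 := left_ne_zero_of_mul hx'
  set c : ℂ := x 2 with hcdef
  -- specialize to one variable
  set φ : R3 →ₐ[ℂ] Polynomial ℂ :=
    MvPolynomial.aeval ![Polynomial.C (x 0), Polynomial.X, Polynomial.C c] with hφ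
  have hφ1 : φ (X 1) = Polynomial.X := by simp [hφ]
  have hφ2 : φ (X 2) = Polynomial.C c := by simp [hφ]
  have hcomp : ∀ p : R3, Polynomial.eval (x 1) (φ p) = eval x p := by
    intro p
    induction p using MvPolynomial.induction_on with
    | C a => simp [hφ]
    | add p q hp hq => simp [map_add, hp, hq]
    | mul_X p i hp => rw [hφ] at hp; fin_cases i <;> simp [hφ, map_mul, hp, ← hcdef]
  have hM0 : φ m ≠ 0 := fun h => hm (by rw [← hcomp, h, Polynomial.eval_zero])
  -- the one-variable equation
  have himg := congrArg φ hkey2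
  simp only [map_pow, map_mul, map_add, map_neg, map_ofNat, hφ1, hφ2] at himg
  -- factor the quartic
  have hωC : (Polynomial.C ω) ^ 2 + Polynomial.C ω + 1 = (0 : Polynomial ℂ) := by
    have h := congrArg (fun z : ℂ => (Polynomial.C z : Polynomial ℂ)) homega
    simpa [map_add, map_pow] using h
  set r1 : ℂ := c * ω with hr1
  set r2 : ℂ := c * ω ^ 2 with hr2
  set r3 : ℂ := -(c * ω) with hr3
  set r4 : ℂ := -(c * ω ^ 2) with hr4
  have hfac : Polynomial.X ^ 4 + Polynomial.X ^ 2 * (Polynomial.C c) ^ 2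
      + (Polynomial.C c) ^ 4
      = (Polynomial.X - Polynomial.C r1) * (Polynomial.X - Polynomial.C r2)
        * (Polynomial.X - Polynomial.C r3) * (Polynomial.X - Polynomial.C r4) := by
    rw [hr1, hr2, hr3, hr4]
    simp only [map_mul, map_neg, map_pow]
    linear_combination ((Polynomial.C c) ^ 2 * Polynomial.X ^ 2
        * ((Polynomial.C ω) ^ 2 - Polynomial.C ω + 1)
      - (Polynomial.C c) ^ 4 * (Polynomial.C ω - 1) * ((Polynomial.C ω) ^ 3 + 1)) * hωC
  have hone : φ n * φ n = ((((-4 * (Polynomial.X - Polynomial.C r1))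
      * (Polynomial.X - Polynomial.C r2)) * (Polynomial.X - Polynomial.C r3))
      * (Polynomial.X - Polynomial.C r4)) * (φ m * φ m) := by
    linear_combination himg - 4 * (φ m) ^ 2 * hfac
  -- distinctness of the roots
  have hne12 : r1 ≠ r2 := by
    rw [hr1, hr2]
    intro h
    have h' : ω = ω ^ 2 := mul_left_cancel₀ hc h
    exact homega_ne_half (by linear_combination homega + h')
  have hne13 : r1 ≠ r3 := by
    rw [hr1, hr3]
    intro h
    have h' : c * ω = 0 := by linear_combination h / 2
    exact (mul_ne_zero hc homega_ne_zero) h'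
  have hne14 : r1 ≠ r4 := by
    rw [hr1, hr4]
    intro h
    exact hc (by linear_combination c * homega - h)
  -- root multiplicity bookkeeping
  have hX1 : (Polynomial.X - Polynomial.C r1 : Polynomial ℂ) ≠ 0 := Polynomial.X_sub_C_ne_zero r1
  have hX2 : (Polynomial.X - Polynomial.C r2 : Polynomial ℂ) ≠ 0 := Polynomial.X_sub_C_ne_zero r2
  have hX3 : (Polynomial.X - Polynomial.C r3 : Polynomial ℂ) ≠ 0 := Polynomial.X_sub_C_ne_zero r3
  have hX4 : (Polynomial.X - Polynomial.C r4 : Polynomial ℂ) ≠ 0 := Polynomial.X_sub_C_ne_zero r4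
  have h4 : (-4 : Polynomial ℂ) ≠ 0 := by norm_num
  have hp1 : (-4 : Polynomial ℂ) * (Polynomial.X - Polynomial.C r1) ≠ 0 := mul_ne_zero h4 hX1
  have hp2 := mul_ne_zero hp1 hX2
  have hp3 := mul_ne_zero hp2 hX3
  have hp4 := mul_ne_zero hp3 hX4
  have hMM : φ m * φ m ≠ 0 := mul_ne_zero hM0 hM0
  have hNN : φ n * φ n ≠ 0 := by rw [hone]; exact mul_ne_zero hp4 hMM
  have hL := Polynomial.rootMultiplicity_mul (x := r1) hNN
  rw [hone] at hL
  rw [Polynomial.rootMultiplicity_mul (mul_ne_zero hp4 hMM),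
    Polynomial.rootMultiplicity_mul hp4,
    Polynomial.rootMultiplicity_mul hp3,
    Polynomial.rootMultiplicity_mul hp2,
    Polynomial.rootMultiplicity_mul hp1,
    Polynomial.rootMultiplicity_mul hMM,
    Polynomial.rootMultiplicity_eq_zero
      (show ¬(-4 : Polynomial ℂ).IsRoot r1 by
        simp [Polynomial.IsRoot]),
    Polynomial.rootMultiplicity_X_sub_C_self (x := r1),
    Polynomial.rootMultiplicity_eq_zero
      (show ¬(Polynomial.X - Polynomial.C r2).IsRoot r1 by
        simp [Polynomial.IsRoot, sub_eq_zero, hne12]),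
    Polynomial.rootMultiplicity_eq_zero
      (show ¬(Polynomial.X - Polynomial.C r3).IsRoot r1 by
        simp [Polynomial.IsRoot, sub_eq_zero, hne13]),
    Polynomial.rootMultiplicity_eq_zero
      (show ¬(Polynomial.X - Polynomial.C r4).IsRoot r1 by
        simp [Polynomial.IsRoot, sub_eq_zero, hne14])] at hL
  omega

end Qt01Aux

/-- `y0²z0² + y0²z1² + y1²z0² − 2y0y1z0z1 + y1²z1²` is irreducible in `ℂ[y0,y1,z0,z1]`. -/
theorem Qt01_irreducible : Irreducible Qt01 := by
  have hQ : (finSuccEquiv ℂ 3) Qt01 = Qt01Aux.P := by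
    have e0 : (finSuccEquiv ℂ 3) (X 0 : MvPolynomial (Fin 4) ℂ) = Polynomial.X :=
      finSuccEquiv_X_zero
    have e1 : (finSuccEquiv ℂ 3) (X 1 : MvPolynomial (Fin 4) ℂ) = Polynomial.C (X 0) := by
      rw [show (1 : Fin 4) = Fin.succ 0 by decide, finSuccEquiv_X_succ]
    have e2 : (finSuccEquiv ℂ 3) (X 2 : MvPolynomial (Fin 4) ℂ) = Polynomial.C (X 1) := by
      rw [show (2 : Fin 4) = Fin.succ 1 by decide, finSuccEquiv_X_succ]
    have e3 : (finSuccEquiv ℂ 3) (X 3 : MvPolynomial (Fin 4) ℂ) = Polynomial.C (X 2) := by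
      rw [show (3 : Fin 4) = Fin.succ 2 by decide, finSuccEquiv_X_succ]
    rw [Qt01, Qt01Aux.P, Qt01Aux.a2, Qt01Aux.a1, Qt01Aux.a0]
    simp only [map_add, map_sub, map_mul, map_pow, map_ofNat, map_neg, e0, e1, e2, e3]
    ring
  have h := Qt01Aux.P_irreducible
  rw [← hQ] at h
  exact (MulEquiv.irreducible_iff (finSuccEquiv ℂ 3)).mp h
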